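/- Let g be a Lie algebra and T_λ = Σ_{n≥0} λ^{(n)}T_n a conformal averaging operator on g (finitely many T_n nonzero). Define on the current Lie conformal algebra Cur g = ℂ[∂] ⊗ g the ℂ[∂]-linear map T(1⊗a) = Σ_n (−∂)^{(n)} ⊗ T_n(a). Then T([T(x)⁽ⁿ⁾ y]) = [T(x)⁽ⁿ⁾ T(y)] for all x,y ∈ Cur g and all n ∈ ℤ≥0. -/

import Mathlib

open Finset

/-- The current conformal algebra `Cur g = ℂ[∂] ⊗ g`, modelled as finitely supported
functions `ℕ →₀ g` (the coefficient of `∂^i`).  The `n`-products are determined by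
`(1⊗a)⁽ⁿ⁾(1⊗b) = δ_{n,0} 1⊗⁅a,b⁆` together with the conformal axioms
`[∂x ⁽ⁿ⁾ y] = −n[x ⁽ⁿ⁻¹⁾ y]` and `[x ⁽ⁿ⁾ ∂y] = ∂[x ⁽ⁿ⁾ y] + n[x ⁽ⁿ⁻¹⁾ y]`, which give
`[∂^i a ⁽ⁿ⁾ ∂^j b] = n! (−1)^i C(j, n−i) ∂^{j−(n−i)} ⊗ ⁅a,b⁆` (zero unless
`i ≤ n ≤ i + j`). -/
noncomputable def curNProd {g : Type*} [LieRing g] [LieAlgebra ℂ g]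
    (n : ℕ) (x y : ℕ →₀ g) : ℕ →₀ g :=
  x.sum fun i a => y.sum fun j b =>
    if i ≤ n ∧ n - i ≤ j then
      ((n.factorial : ℂ) * (-1) ^ i * (j.choose (n - i))) •
        Finsupp.single (j - (n - i)) ⁅a, b⁆
    else 0

/-- The `ℂ[∂]`-linear extension of `1⊗a ↦ Σ_n (−∂)^(n) ⊗ T_n a` to `Cur g`. -/
noncomputable def curAveraging {g : Type*} [LieRing g] [LieAlgebra ℂ g]
    (T : ℕ → (g →ₗ[ℂ] g)) (N : ℕ) (x : ℕ →₀ g) : ℕ →₀ g :=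
  x.sum fun i a => ∑ n ∈ range (N + 1),
    (((-1 : ℂ) ^ n / n.factorial) • Finsupp.single (i + n) (T n a))

section helpers
variable {g : Type*} [LieRing g] [LieAlgebra ℂ g] (T : ℕ → (g →ₗ[ℂ] g)) (N : ℕ)

lemma curAveraging_single (i : ℕ) (a : g) :
    curAveraging T N (Finsupp.single i a) =
      ∑ p ∈ range (N + 1), (((-1 : ℂ) ^ p / p.factorial) • Finsupp.single (i + p) (T p a)) := by
  unfold curAveraging
  rw [Finsupp.sum_single_index]
  simp

lemma curAveraging_zero : curAveraging T N 0 = 0 := by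
  unfold curAveraging; simp

lemma curAveraging_add (x y : ℕ →₀ g) :
    curAveraging T N (x + y) = curAveraging T N x + curAveraging T N y := by
  unfold curAveraging
  rw [Finsupp.sum_add_index]
  · intro i _; simp
  · intro i _ b₁ b₂
    rw [← Finset.sum_add_distrib]
    refine Finset.sum_congr rfl fun p _ => ?_
    rw [map_add, Finsupp.single_add, smul_add]

lemma curAveraging_smul (c : ℂ) (x : ℕ →₀ g) :
    curAveraging T N (c • x) = c • curAveraging T N x := by
  unfold curAveraging
  rw [Finsupp.sum_smul_index', Finsupp.smul_sum]
  · refine Finsupp.sum_congr fun i _ => ?_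
    rw [Finset.smul_sum]
    refine Finset.sum_congr rfl fun p _ => ?_
    rw [map_smul, ← Finsupp.smul_single, smul_comm]
  · intro i; simp

lemma curAveraging_finsetSum {ι : Type*} (s : Finset ι) (f : ι → (ℕ →₀ g)) :
    curAveraging T N (∑ p ∈ s, f p) = ∑ p ∈ s, curAveraging T N (f p) := by
  classical
  induction s using Finset.induction_on with
  | empty => simp [curAveraging_zero]
  | insert _ _ h ih => rw [Finset.sum_insert h, Finset.sum_insert h, curAveraging_add, ih]

lemma curNProd_single_single (n i j : ℕ) (a b : g) :
    curNProd n (Finsupp.single i a) (Finsupp.single j b) =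
      if i ≤ n ∧ n - i ≤ j then
        ((n.factorial : ℂ) * (-1) ^ i * (j.choose (n - i))) •
          Finsupp.single (j - (n - i)) ⁅a, b⁆
      else 0 := by
  unfold curNProd
  rw [Finsupp.sum_single_index, Finsupp.sum_single_index]
  · split_ifs <;> simp
  · rw [Finsupp.sum_single_index] <;> split_ifs <;> simp

lemma curNProd_zero_left (n : ℕ) (y : ℕ →₀ g) : curNProd n 0 y = 0 := by
  unfold curNProd; simp

lemma curNProd_zero_right (n : ℕ) (x : ℕ →₀ g) : curNProd n x 0 = 0 := by
  unfold curNProd; simp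

lemma curNProd_add_left (n : ℕ) (x x' y : ℕ →₀ g) :
    curNProd n (x + x') y = curNProd n x y + curNProd n x' y := by
  unfold curNProd
  rw [Finsupp.sum_add_index]
  · intro i _
    refine Finset.sum_eq_zero fun j _ => ?_
    simp
  · intro i _ a₁ a₂
    rw [← Finsupp.sum_add]
    refine Finsupp.sum_congr fun j _ => ?_
    split_ifs <;> simp [add_lie, Finsupp.single_add, smul_add]

lemma curNProd_add_right (n : ℕ) (x y y' : ℕ →₀ g) :
    curNProd n x (y + y') = curNProd n x y + curNProd n x y' := by
  unfold curNProd
  rw [← Finsupp.sum_add]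
  refine Finsupp.sum_congr fun i a => ?_
  rw [Finsupp.sum_add_index]
  · intro j _; split_ifs <;> simp
  · intro j _ b₁ b₂
    split_ifs <;> simp [lie_add, Finsupp.single_add, smul_add]

lemma curNProd_smul_left (n : ℕ) (c : ℂ) (x y : ℕ →₀ g) :
    curNProd n (c • x) y = c • curNProd n x y := by
  unfold curNProd
  rw [Finsupp.sum_smul_index', Finsupp.smul_sum]
  · refine Finsupp.sum_congr fun i a => ?_
    rw [Finsupp.smul_sum]
    refine Finsupp.sum_congr fun j b => ?_
    split_ifs with h
    · rw [smul_lie, Finsupp.smul_single, Finsupp.smul_single, Finsupp.smul_single, smul_comm]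
    · simp
  · intro i
    refine Finset.sum_eq_zero fun j _ => ?_
    simp

lemma curNProd_smul_right (n : ℕ) (c : ℂ) (x y : ℕ →₀ g) :
    curNProd n x (c • y) = c • curNProd n x y := by
  unfold curNProd
  rw [Finsupp.smul_sum]
  refine Finsupp.sum_congr fun i a => ?_
  rw [Finsupp.sum_smul_index', Finsupp.smul_sum]
  · refine Finsupp.sum_congr fun j b => ?_
    split_ifs with h
    · rw [lie_smul, Finsupp.smul_single, Finsupp.smul_single, Finsupp.smul_single, smul_comm]
    · simp
  · intro j; split_ifs <;> simp

lemma curNProd_sum_left {ι : Type*} (n : ℕ) (s : Finset ι) (f : ι → (ℕ →₀ g)) (y : ℕ →₀ g) :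
    curNProd n (∑ p ∈ s, f p) y = ∑ p ∈ s, curNProd n (f p) y := by
  classical
  induction s using Finset.induction_on with
  | empty => simp [curNProd_zero_left]
  | insert _ _ h ih => rw [Finset.sum_insert h, Finset.sum_insert h, curNProd_add_left, ih]

lemma curNProd_sum_right {ι : Type*} (n : ℕ) (s : Finset ι) (x : ℕ →₀ g) (f : ι → (ℕ →₀ g)) :
    curNProd n x (∑ p ∈ s, f p) = ∑ p ∈ s, curNProd n x (f p) := by
  classical
  induction s using Finset.induction_on with
  | empty => simp [curNProd_zero_right]
  | insert _ _ h ih => rw [Finset.sum_insert h, Finset.sum_insert h, curNProd_add_right, ih]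


lemma key_id (m j K : ℕ) :
    ∑ t ∈ range (m + 1),
      (if t ≤ K then ((-1 : ℂ)) ^ t * (m.choose t) * ((j + m - t).choose (K - t)) else 0)
      = (j.choose K : ℂ) := by
  induction m generalizing j K with
  | zero => simp
  | succ m ih =>
    have hsplit : ∀ t ∈ range (m + 2),
        (if t ≤ K then ((-1 : ℂ)) ^ t * ((m+1).choose t) * ((j + (m+1) - t).choose (K - t)) else 0)
        = (if t ≤ K then ((-1 : ℂ)) ^ t * (m.choose t) * (((j+1) + m - t).choose (K - t)) else 0)
          + (if 1 ≤ t ∧ t ≤ K then ((-1 : ℂ)) ^ t * (m.choose (t-1)) * ((j + (m+1) - t).choose (K - t)) else 0) := by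
      intro t _
      rcases Nat.eq_zero_or_pos t with rfl | hpos
      · have e : j + (m+1) = j + 1 + m := by omega
        simp [e]
      · split_ifs with h h2 h3
        · have hc : (m+1).choose t = m.choose t + m.choose (t-1) := by
            rcases Nat.exists_eq_succ_of_ne_zero hpos.ne' with ⟨s, rfl⟩
            simp [Nat.choose_succ_succ, Nat.add_comm]
          have h2 : j + (m+1) - t = (j+1) + m - t := by omega
          rw [hc, h2]; push_cast; ring
        · omega
        · omega
        · simp
    rw [Finset.sum_congr rfl hsplit, Finset.sum_add_distrib]
    have hA : ∑ t ∈ range (m + 2),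
        (if t ≤ K then ((-1 : ℂ)) ^ t * (m.choose t) * (((j+1) + m - t).choose (K - t)) else 0)
        = ((j+1).choose K : ℂ) := by
      rw [Finset.sum_range_succ]
      have hz : (if m+1 ≤ K then ((-1 : ℂ)) ^ (m+1) * (m.choose (m+1)) * (((j+1) + m - (m+1)).choose (K - (m+1))) else 0) = 0 := by
        split_ifs <;> simp [Nat.choose_succ_self]
      rw [hz, add_zero, ih]
    have hB : ∑ t ∈ range (m + 2),
        (if 1 ≤ t ∧ t ≤ K then ((-1 : ℂ)) ^ t * (m.choose (t-1)) * ((j + (m+1) - t).choose (K - t)) else 0)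
        = if 1 ≤ K then -((j.choose (K-1) : ℂ)) else 0 := by
      rw [Finset.sum_range_succ']
      simp only [Nat.le_zero, Nat.one_ne_zero, false_and, if_false, add_zero]
      rcases Nat.eq_zero_or_pos K with rfl | hK
      · simp
      · have hcong : ∀ t ∈ range (m+1),
            (if 1 ≤ t + 1 ∧ t + 1 ≤ K then ((-1 : ℂ)) ^ (t+1) * (m.choose (t+1-1)) * ((j + (m+1) - (t+1)).choose (K - (t+1))) else 0)
            = -(if t ≤ K - 1 then ((-1 : ℂ)) ^ t * (m.choose t) * ((j + m - t).choose ((K-1) - t)) else 0) := by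
          intro t _
          have e1 : (1 ≤ t + 1 ∧ t + 1 ≤ K) ↔ t ≤ K - 1 := by omega
          have e2 : t + 1 - 1 = t := by omega
          rw [e2]
          split_ifs with h h2 h2
          · have e3 : j + (m+1) - (t+1) = j + m - t := by omega
            have e4 : K - (t+1) = (K-1) - t := by omega
            rw [e3, e4, pow_succ]; ring
          · exact absurd (e1.mp h) h2
          · exact absurd (e1.mpr h2) h
          · simp
        rw [Finset.sum_congr rfl hcong, Finset.sum_neg_distrib, ih j (K-1)]
        rw [if_pos (by omega : 1 ≤ K)]
    rw [hA, hB]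
    rcases Nat.eq_zero_or_pos K with rfl | hK
    · simp
    · have : (j+1).choose K = j.choose (K-1) + j.choose K := by
        rcases Nat.exists_eq_succ_of_ne_zero hK.ne' with ⟨K', rfl⟩
        simp [Nat.choose_succ_succ]
      rw [if_pos (by omega : 1 ≤ K), this]
      push_cast; ring

lemma key_id' (M m j K : ℕ) (hK : K < M) :
    ∑ t ∈ range M,
      (if t ≤ m ∧ t ≤ K ∧ K ≤ j + m then
        ((-1 : ℂ)) ^ t * (m.choose t) * ((j + m - t).choose (K - t)) else 0)
      = (j.choose K : ℂ) := by
  by_cases hKjm : K ≤ j + m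
  · have step1 : ∀ t ∈ range M,
        (if t ≤ m ∧ t ≤ K ∧ K ≤ j + m then
          ((-1 : ℂ)) ^ t * (m.choose t) * ((j + m - t).choose (K - t)) else 0)
        = (if t ≤ K then ((-1 : ℂ)) ^ t * (m.choose t) * ((j + m - t).choose (K - t)) else 0) := by
      intro t _
      split_ifs with h1 h2 h2
      · rfl
      · exact absurd h1.2.1 h2
      · have hmt : m < t := by omega
        simp [Nat.choose_eq_zero_of_lt hmt]
      · rfl
    rw [Finset.sum_congr rfl step1]
    have eq1 : ∑ t ∈ range M, (if t ≤ K then ((-1 : ℂ)) ^ t * (m.choose t) * ((j + m - t).choose (K - t)) else 0)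
        = ∑ t ∈ range (max M (m+1)), (if t ≤ K then ((-1 : ℂ)) ^ t * (m.choose t) * ((j + m - t).choose (K - t)) else 0) := by
      refine Finset.sum_subset (by intro x hx; simp at hx ⊢; omega) ?_
      intro t ht1 ht2
      have h1 : M ≤ t := by simpa using ht2
      rw [if_neg (by omega)]
    have eq2 : ∑ t ∈ range (m+1), (if t ≤ K then ((-1 : ℂ)) ^ t * (m.choose t) * ((j + m - t).choose (K - t)) else 0)
        = ∑ t ∈ range (max M (m+1)), (if t ≤ K then ((-1 : ℂ)) ^ t * (m.choose t) * ((j + m - t).choose (K - t)) else 0) := by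
      refine Finset.sum_subset (by intro x hx; simp at hx ⊢; omega) ?_
      intro t ht1 ht2
      have h1 : m + 1 ≤ t := by simpa using ht2
      have hmt : m < t := by omega
      split_ifs <;> simp [Nat.choose_eq_zero_of_lt hmt]
    rw [eq1, ← eq2, key_id]
  · rw [Finset.sum_eq_zero (fun t _ => by rw [if_neg (by omega)])]
    rw [Nat.choose_eq_zero_of_lt (by omega), Nat.cast_zero]

lemma neg_one_pow_congr_mod2 {a b : ℕ} (h : a % 2 = b % 2) : ((-1 : ℂ)) ^ a = (-1) ^ b := by
  rcases Nat.even_or_odd a with ha | ha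
  · have hb : Even b := Nat.even_iff.mpr (by rw [← h]; exact Nat.even_iff.mp ha)
    rw [ha.neg_one_pow, hb.neg_one_pow]
  · have hb : Odd b := Nat.odd_iff.mpr (by rw [← h]; exact Nat.odd_iff.mp ha)
    rw [ha.neg_one_pow, hb.neg_one_pow]

lemma cast_fact_ne_zero (k : ℕ) : ((k.factorial : ℂ)) ≠ 0 :=
  Nat.cast_ne_zero.mpr (Nat.factorial_ne_zero k)

lemma scalar_eq (Fc X : ℂ) (u t m i : ℕ) (htm : t ≤ m) :
    ((-1 : ℂ) ^ (t + u) / (t + u).factorial) * ((-1 : ℂ) ^ (m - t) / (m - t).factorial)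
        * (Fc * (-1 : ℂ) ^ (i + (t + u)) * X) * (((t + u).choose t : ℕ) : ℂ)
      = ((-1 : ℂ) ^ t * (m.choose t) * X)
          * (Fc * (-1 : ℂ) ^ (i + m) / ((u.factorial : ℂ) * (m.factorial : ℂ))) := by
  obtain ⟨r, rfl⟩ : ∃ r, m = t + r := ⟨m - t, by omega⟩
  have hr : t + r - t = r := by omega
  rw [hr]
  have h1 : (((t + u).choose t : ℕ) : ℂ) * (t.factorial : ℂ) * (u.factorial : ℂ)
      = ((t + u).factorial : ℂ) := by
    have := Nat.choose_mul_factorial_mul_factorial (Nat.le_add_right t u)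
    rw [Nat.add_sub_cancel_left] at this
    exact_mod_cast this
  have h2 : (((t + r).choose t : ℕ) : ℂ) * (t.factorial : ℂ) * (r.factorial : ℂ)
      = ((t + r).factorial : ℂ) := by
    have := Nat.choose_mul_factorial_mul_factorial (Nat.le_add_right t r)
    rw [Nat.add_sub_cancel_left] at this
    exact_mod_cast this
  have hs : ((-1 : ℂ)) ^ (t + u) * ((-1 : ℂ)) ^ r * ((-1 : ℂ)) ^ (i + (t + u))
      = ((-1 : ℂ)) ^ t * ((-1 : ℂ)) ^ (i + (t + r)) := by
    rw [← pow_add, ← pow_add, ← pow_add]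
    exact neg_one_pow_congr_mod2 (by omega)
  have hmag : (((t + u).choose t : ℕ) : ℂ) / (((t + u).factorial : ℂ) * (r.factorial : ℂ))
      = (((t + r).choose t : ℕ) : ℂ) / ((u.factorial : ℂ) * ((t + r).factorial : ℂ)) := by
    rw [div_eq_div_iff (mul_ne_zero (cast_fact_ne_zero _) (cast_fact_ne_zero _))
      (mul_ne_zero (cast_fact_ne_zero _) (cast_fact_ne_zero _)), ← h1, ← h2]
    ring
  calc ((-1 : ℂ) ^ (t + u) / (t + u).factorial) * ((-1 : ℂ) ^ r / (r.factorial : ℂ))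
        * (Fc * (-1 : ℂ) ^ (i + (t + u)) * X) * (((t + u).choose t : ℕ) : ℂ)
      = ((-1 : ℂ) ^ (t + u) * ((-1 : ℂ)) ^ r * ((-1 : ℂ)) ^ (i + (t + u)))
          * (Fc * X * ((((t + u).choose t : ℕ) : ℂ) / (((t + u).factorial : ℂ) * (r.factorial : ℂ)))) := by
        ring
    _ = (((-1 : ℂ)) ^ t * ((-1 : ℂ)) ^ (i + (t + r)))
          * (Fc * X * ((((t + r).choose t : ℕ) : ℂ) / ((u.factorial : ℂ) * ((t + r).factorial : ℂ)))) := by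
        rw [hs, hmag]
    _ = ((-1 : ℂ) ^ t * ((t + r).choose t) * X)
          * (Fc * (-1 : ℂ) ^ (i + (t + r)) / ((u.factorial : ℂ) * ((t + r).factorial : ℂ))) := by
        ring

/-- generic shifted-sum lemma (left shift by `t`). -/
lemma shift_sum {β : Type*} [AddCommMonoid β] (M t : ℕ) (f : ℕ → β)
    (h0 : ∀ p, p < t → f p = 0) (h1 : ∀ p, M ≤ p → f p = 0) :
    ∑ p ∈ range M, f p = ∑ u ∈ range M, f (t + u) := by
  rcases le_or_gt t M with h | h
  · have e1 : ∑ u ∈ range M, f (t + u) = ∑ p ∈ Ico t (t + M), f p := by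
      rw [Finset.sum_Ico_eq_sum_range, Nat.add_sub_cancel_left]
    have e2 : ∑ p ∈ Ico t M, f p = ∑ p ∈ Ico t (t + M), f p := by
      refine Finset.sum_subset (Finset.Ico_subset_Ico le_rfl (by omega)) ?_
      intro p hp hnp
      simp only [Finset.mem_Ico] at hp hnp
      exact h1 p (by omega)
    have e3 : ∑ p ∈ Ico t M, f p = ∑ p ∈ range M, f p := by
      refine Finset.sum_subset (by rw [Finset.range_eq_Ico]; exact Finset.Ico_subset_Ico (by omega) le_rfl) ?_
      intro p hp hnp
      simp only [Finset.mem_range, Finset.mem_Ico] at hp hnp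
      exact h0 p (by omega)
    rw [← e3, e2, e1]
  · rw [Finset.sum_eq_zero fun p hp => h0 p (by simp at hp; omega),
        Finset.sum_eq_zero fun u _ => h1 (t + u) (by omega)]

/-- generic shifted-sum lemma (right shift by `t`, doubled range). -/
lemma shift_sum' {β : Type*} [AddCommMonoid β] (M t : ℕ) (ht : t ≤ M) (f : ℕ → β)
    (h1 : ∀ q, M ≤ q → f q = 0) :
    ∑ q ∈ range M, f q = ∑ m ∈ range (2 * M), (if t ≤ m then f (m - t) else 0) := by
  have e1 : ∑ m ∈ range (2 * M), (if t ≤ m then f (m - t) else 0)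
      = ∑ m ∈ Ico t (2 * M), (if t ≤ m then f (m - t) else 0) := by
    refine (Finset.sum_subset (by rw [Finset.range_eq_Ico]; exact Finset.Ico_subset_Ico (by omega) le_rfl) ?_).symm
    intro m hm hnm
    simp only [Finset.mem_range, Finset.mem_Ico] at hm hnm
    rw [if_neg (by omega)]
  have e2 : ∑ m ∈ Ico t (2 * M), (if t ≤ m then f (m - t) else 0)
      = ∑ m ∈ Ico t (2 * M), f (m - t) := by
    refine Finset.sum_congr rfl fun m hm => ?_
    simp only [Finset.mem_Ico] at hm
    rw [if_pos hm.1]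
  have e3 : ∑ m ∈ Ico t (2 * M), f (m - t) = ∑ v ∈ range (2 * M - t), f v := by
    rw [Finset.sum_Ico_eq_sum_range]
    exact Finset.sum_congr rfl fun v _ => by rw [Nat.add_sub_cancel_left]
  have e4 : ∑ q ∈ range M, f q = ∑ v ∈ range (2 * M - t), f v := by
    refine Finset.sum_subset (by simp [Finset.range_subset]; omega) ?_
    intro v hv hnv
    simp only [Finset.mem_range] at hv hnv
    exact h1 v (by omega)
  rw [e4, ← e3, ← e2, ← e1]

noncomputable def Fterm (i j n : ℕ) (a b : g) (p m : ℕ) : ℕ →₀ g :=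
  if i + p ≤ n ∧ n - (i + p) ≤ j then
    (((-1 : ℂ) ^ p / p.factorial)
      * ((n.factorial : ℂ) * (-1) ^ (i + p) * (j.choose (n - (i + p))))
      * ((-1 : ℂ) ^ m / m.factorial)) •
      Finsupp.single ((j - (n - (i + p))) + m) (T m ⁅T p a, b⁆)
  else 0

noncomputable def Gterm (i j n : ℕ) (a b : g) (p q : ℕ) : ℕ →₀ g :=
  if i + p ≤ n ∧ n - (i + p) ≤ j + q then
    (((-1 : ℂ) ^ p / p.factorial) * ((-1 : ℂ) ^ q / q.factorial)
      * ((n.factorial : ℂ) * (-1) ^ (i + p) * ((j + q).choose (n - (i + p))))) •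
      Finsupp.single ((j + q) - (n - (i + p))) ⁅T p a, T q b⁆
  else 0

noncomputable def Hterm (i j n : ℕ) (a b : g) (p q t : ℕ) : ℕ →₀ g :=
  if i + p ≤ n ∧ n - (i + p) ≤ j + q then
    (((-1 : ℂ) ^ p / p.factorial) * ((-1 : ℂ) ^ q / q.factorial)
      * ((n.factorial : ℂ) * (-1) ^ (i + p) * ((j + q).choose (n - (i + p))))
      * (p.choose t)) •
      Finsupp.single ((j + q) - (n - (i + p))) (T (q + t) ⁅T (p - t) a, b⁆)
  else 0

variable {T} {N}

lemma lhs_eq (i j n : ℕ) (a b : g) :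
    curAveraging T N (curNProd n (curAveraging T N (Finsupp.single i a)) (Finsupp.single j b))
      = ∑ p ∈ range (N + 1), ∑ m ∈ range (N + 1), Fterm T i j n a b p m := by
  rw [curAveraging_single, curNProd_sum_left, curAveraging_finsetSum]
  refine Finset.sum_congr rfl fun p _ => ?_
  rw [curNProd_smul_left, curNProd_single_single, curAveraging_smul,
    apply_ite (curAveraging T N), curAveraging_zero, curAveraging_smul, curAveraging_single]
  unfold Fterm
  split_ifs with h
  · rw [Finset.smul_sum, Finset.smul_sum]
    refine Finset.sum_congr rfl fun m _ => ?_
    rw [smul_smul, smul_smul]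
  · simp

lemma rhs_eq (i j n : ℕ) (a b : g) :
    curNProd n (curAveraging T N (Finsupp.single i a)) (curAveraging T N (Finsupp.single j b))
      = ∑ p ∈ range (N + 1), ∑ q ∈ range (N + 1), Gterm T i j n a b p q := by
  rw [curAveraging_single, curAveraging_single, curNProd_sum_left]
  refine Finset.sum_congr rfl fun p _ => ?_
  rw [curNProd_smul_left, curNProd_sum_right, Finset.smul_sum]
  refine Finset.sum_congr rfl fun q _ => ?_
  rw [curNProd_smul_right, curNProd_single_single]
  unfold Gterm
  split_ifs with h
  · rw [smul_smul, smul_smul]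
  · simp

lemma Fterm_zero_left (hsupp : ∀ k, N < k → T k = 0) {p : ℕ} (hp : N < p)
    (i j n m : ℕ) (a b : g) : Fterm T i j n a b p m = 0 := by
  unfold Fterm
  split_ifs <;> simp [hsupp p hp]

lemma Fterm_zero_right (hsupp : ∀ k, N < k → T k = 0) {m : ℕ} (hm : N < m)
    (i j n p : ℕ) (a b : g) : Fterm T i j n a b p m = 0 := by
  unfold Fterm
  split_ifs <;> simp [hsupp m hm]

lemma Gterm_zero_left (hsupp : ∀ k, N < k → T k = 0) {p : ℕ} (hp : N < p)
    (i j n q : ℕ) (a b : g) : Gterm T i j n a b p q = 0 := by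
  unfold Gterm
  split_ifs <;> simp [hsupp p hp]

lemma Gterm_zero_right (hsupp : ∀ k, N < k → T k = 0) {q : ℕ} (hq : N < q)
    (i j n p : ℕ) (a b : g) : Gterm T i j n a b p q = 0 := by
  unfold Gterm
  split_ifs <;> simp [hsupp q hq]

lemma Hterm_zero_choose {p t : ℕ} (hpt : p < t) (i j n q : ℕ) (a b : g) :
    Hterm T i j n a b p q t = 0 := by
  unfold Hterm
  split_ifs <;> simp [Nat.choose_eq_zero_of_lt hpt]

lemma Hterm_zero_guard {i p n : ℕ} (hpn : n < i + p) (j q t : ℕ) (a b : g) :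
    Hterm T i j n a b p q t = 0 := by
  unfold Hterm
  rw [if_neg (by omega)]

lemma Hterm_zero_supp (hsupp : ∀ k, N < k → T k = 0) {q t : ℕ} (hqt : N < q + t)
    (i j n p : ℕ) (a b : g) : Hterm T i j n a b p q t = 0 := by
  unfold Hterm
  split_ifs <;> simp [hsupp (q + t) hqt]

lemma Gterm_expand
    (hT1 : ∀ (n m : ℕ) (x y : g),
      ⁅T n x, T m y⁆ =
        ∑ t ∈ range (n + 1), (n.choose t : ℂ) • T (m + t) ⁅T (n - t) x, y⁆)
    (M i j n : ℕ) (a b : g) (p q : ℕ) (hp : p < M) :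
    Gterm T i j n a b p q = ∑ t ∈ range M, Hterm T i j n a b p q t := by
  unfold Gterm Hterm
  split_ifs with h
  · rw [hT1 p q a b, Finsupp.single_finset_sum, Finset.smul_sum]
    have base : ∀ t ∈ range (p + 1),
        ((((-1 : ℂ) ^ p / p.factorial) * ((-1 : ℂ) ^ q / q.factorial)
          * ((n.factorial : ℂ) * (-1) ^ (i + p) * ((j + q).choose (n - (i + p))))) •
          Finsupp.single ((j + q) - (n - (i + p)))
            ((p.choose t : ℂ) • T (q + t) ⁅T (p - t) a, b⁆))
        = (((-1 : ℂ) ^ p / p.factorial) * ((-1 : ℂ) ^ q / q.factorial)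
          * ((n.factorial : ℂ) * (-1) ^ (i + p) * ((j + q).choose (n - (i + p))))
          * (p.choose t)) •
          Finsupp.single ((j + q) - (n - (i + p))) (T (q + t) ⁅T (p - t) a, b⁆) := by
      intro t _
      rw [← Finsupp.smul_single, smul_smul]
    rw [Finset.sum_congr rfl base]
    refine Finset.sum_subset (by simp [Finset.range_subset]; omega) ?_
    intro t ht hnt
    simp only [Finset.mem_range] at ht hnt
    have : p < t := by omega
    simp [Nat.choose_eq_zero_of_lt this]
  · exact (Finset.sum_eq_zero fun t _ => rfl).symm

lemma step7 (M i j n : ℕ) (a b : g) (hMn : n < M) (u m : ℕ) :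
    ∑ t ∈ range M, (if t ≤ m then Hterm T i j n a b (t + u) (m - t) t else 0)
      = Fterm T i j n a b u m := by
  by_cases hiu : i + u ≤ n
  · have step : ∀ t ∈ range M,
        (if t ≤ m then Hterm T i j n a b (t + u) (m - t) t else 0)
        = (if t ≤ m ∧ t ≤ n - (i + u) ∧ n - (i + u) ≤ j + m then
            ((-1 : ℂ)) ^ t * (m.choose t) * ((j + m - t).choose ((n - (i + u)) - t)) else 0)
          • (((n.factorial : ℂ) * (-1) ^ (i + m) / ((u.factorial : ℂ) * (m.factorial : ℂ))) •
              Finsupp.single (j + m - (n - (i + u))) (T m ⁅T u a, b⁆)) := by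
      intro t _
      by_cases hg : t ≤ m ∧ t ≤ n - (i + u) ∧ n - (i + u) ≤ j + m
      · rw [if_pos hg.1, if_pos hg]
        unfold Hterm
        rw [if_pos (show i + (t + u) ≤ n ∧ n - (i + (t + u)) ≤ j + (m - t) by omega)]
        have e1 : (m - t) + t = m := by omega
        have e2 : (t + u) - t = u := by omega
        have e3 : (j + (m - t)) - (n - (i + (t + u))) = j + m - (n - (i + u)) := by omega
        have e4 : j + (m - t) = j + m - t := by omega
        have e5 : n - (i + (t + u)) = (n - (i + u)) - t := by omega
        rw [e1, e2, e3, e4, e5, smul_smul]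
        congr 1
        exact scalar_eq (n.factorial : ℂ) (((j + m - t).choose ((n - (i + u)) - t) : ℕ) : ℂ) u t m i hg.1
      · rw [if_neg hg, zero_smul]
        by_cases htm : t ≤ m
        · rw [if_pos htm]
          unfold Hterm
          rw [if_neg (by omega)]
        · rw [if_neg htm]
    rw [Finset.sum_congr rfl step, ← Finset.sum_smul,
      key_id' M m j (n - (i + u)) (by omega)]
    unfold Fterm
    by_cases hKj : n - (i + u) ≤ j
    · rw [if_pos ⟨hiu, hKj⟩, smul_smul]
      have epos : (j - (n - (i + u))) + m = j + m - (n - (i + u)) := by omega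
      rw [epos]
      congr 1
      have hs : ((-1 : ℂ)) ^ u * ((-1 : ℂ)) ^ (i + u) * ((-1 : ℂ)) ^ m = ((-1 : ℂ)) ^ (i + m) := by
        rw [← pow_add, ← pow_add]
        exact neg_one_pow_congr_mod2 (by omega)
      calc ((j.choose (n - (i + u)) : ℕ) : ℂ)
            * ((n.factorial : ℂ) * (-1) ^ (i + m) / ((u.factorial : ℂ) * (m.factorial : ℂ)))
          = (((-1 : ℂ)) ^ u * ((-1 : ℂ)) ^ (i + u) * ((-1 : ℂ)) ^ m)
              * ((j.choose (n - (i + u)) : ℕ) : ℂ)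
              * ((n.factorial : ℂ) / ((u.factorial : ℂ) * (m.factorial : ℂ))) := by
            rw [hs]; ring
        _ = (-1 : ℂ) ^ u / (u.factorial : ℂ)
              * ((n.factorial : ℂ) * (-1) ^ (i + u) * ((j.choose (n - (i + u)) : ℕ) : ℂ))
              * ((-1 : ℂ) ^ m / (m.factorial : ℂ)) := by
            ring
    · rw [if_neg (by omega), Nat.choose_eq_zero_of_lt (by omega), Nat.cast_zero, zero_smul]
  · rw [Finset.sum_eq_zero, (by unfold Fterm; rw [if_neg (by omega)] :
      Fterm T i j n a b u m = 0)]
    intro t _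
    split_ifs with htm
    · exact Hterm_zero_guard (by omega) _ _ _ _ _
    · rfl

lemma sum_FG (hsupp : ∀ k, N < k → T k = 0)
    (hT1 : ∀ (n m : ℕ) (x y : g),
      ⁅T n x, T m y⁆ =
        ∑ t ∈ range (n + 1), (n.choose t : ℂ) • T (m + t) ⁅T (n - t) x, y⁆)
    (i j n : ℕ) (a b : g) :
    ∑ p ∈ range (N + 1), ∑ q ∈ range (N + 1), Gterm T i j n a b p q
      = ∑ p ∈ range (N + 1), ∑ m ∈ range (N + 1), Fterm T i j n a b p m := by
  set M : ℕ := N + n + 2 with hM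
  have hMn : n < M := by omega
  have hMN : N < M := by omega
  -- extend the F-sum
  have hF : ∑ p ∈ range (N + 1), ∑ m ∈ range (N + 1), Fterm T i j n a b p m
      = ∑ p ∈ range M, ∑ m ∈ range (2 * M), Fterm T i j n a b p m := by
    have inner : ∀ p, ∑ m ∈ range (N + 1), Fterm T i j n a b p m
        = ∑ m ∈ range (2 * M), Fterm T i j n a b p m := fun p => by
      refine Finset.sum_subset (by simp [Finset.range_subset]; omega) ?_
      intro m _ hm
      simp only [Finset.mem_range] at hm
      exact Fterm_zero_right hsupp (by omega) _ _ _ _ _ _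
    rw [Finset.sum_congr rfl fun p _ => inner p]
    refine Finset.sum_subset (by simp [Finset.range_subset]; omega) ?_
    intro p _ hp
    simp only [Finset.mem_range] at hp
    exact Finset.sum_eq_zero fun m _ => Fterm_zero_left hsupp (by omega) _ _ _ _ _ _
  -- extend the G-sum
  have hG : ∑ p ∈ range (N + 1), ∑ q ∈ range (N + 1), Gterm T i j n a b p q
      = ∑ p ∈ range M, ∑ q ∈ range M, Gterm T i j n a b p q := by
    have inner : ∀ p, ∑ q ∈ range (N + 1), Gterm T i j n a b p q
        = ∑ q ∈ range M, Gterm T i j n a b p q := fun p => by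
      refine Finset.sum_subset (by simp [Finset.range_subset]; omega) ?_
      intro q _ hq
      simp only [Finset.mem_range] at hq
      exact Gterm_zero_right hsupp (by omega) _ _ _ _ _ _
    rw [Finset.sum_congr rfl fun p _ => inner p]
    refine Finset.sum_subset (by simp [Finset.range_subset]; omega) ?_
    intro p _ hp
    simp only [Finset.mem_range] at hp
    exact Finset.sum_eq_zero fun q _ => Gterm_zero_left hsupp (by omega) _ _ _ _ _ _
  rw [hF, hG]
  calc ∑ p ∈ range M, ∑ q ∈ range M, Gterm T i j n a b p q
      = ∑ p ∈ range M, ∑ q ∈ range M, ∑ t ∈ range M, Hterm T i j n a b p q t := by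
        refine Finset.sum_congr rfl fun p hp => Finset.sum_congr rfl fun q _ => ?_
        exact Gterm_expand hT1 M i j n a b p q (by simpa using hp)
    _ = ∑ t ∈ range M, ∑ p ∈ range M, ∑ q ∈ range M, Hterm T i j n a b p q t := by
        rw [Finset.sum_congr rfl fun p _ => Finset.sum_comm]
        exact Finset.sum_comm
    _ = ∑ t ∈ range M, ∑ u ∈ range M, ∑ q ∈ range M, Hterm T i j n a b (t + u) q t := by
        refine Finset.sum_congr rfl fun t _ => ?_
        refine shift_sum M t _ ?_ ?_
        · intro p hpt
          exact Finset.sum_eq_zero fun q _ => Hterm_zero_choose hpt _ _ _ _ _ _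
        · intro p hMp
          exact Finset.sum_eq_zero fun q _ => Hterm_zero_guard (by omega) _ _ _ _ _
    _ = ∑ t ∈ range M, ∑ u ∈ range M, ∑ m ∈ range (2 * M),
          (if t ≤ m then Hterm T i j n a b (t + u) (m - t) t else 0) := by
        refine Finset.sum_congr rfl fun t ht => Finset.sum_congr rfl fun u _ => ?_
        simp only [Finset.mem_range] at ht
        exact shift_sum' M t (by omega) _ fun q hq =>
          Hterm_zero_supp hsupp (by omega) _ _ _ _ _ _
    _ = ∑ u ∈ range M, ∑ m ∈ range (2 * M), ∑ t ∈ range M,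
          (if t ≤ m then Hterm T i j n a b (t + u) (m - t) t else 0) := by
        rw [Finset.sum_comm]
        exact Finset.sum_congr rfl fun u _ => Finset.sum_comm
    _ = ∑ u ∈ range M, ∑ m ∈ range (2 * M), Fterm T i j n a b u m := by
        exact Finset.sum_congr rfl fun u _ => Finset.sum_congr rfl fun m _ =>
          step7 M i j n a b hMn u m
end helpers


/-- A conformal averaging operator `T_λ` on a Lie algebra `g` induces an averaging
operator `T(1⊗a) = Σ_n (−∂)^(n) ⊗ T_n(a)` on the current conformal algebra `Cur g`:
`T([T(x)⁽ⁿ⁾ y]) = [T(x)⁽ⁿ⁾ T(y)]` for all `x, y ∈ Cur g` and `n ∈ ℤ≥0`. -/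
theorem conformal_averaging_is_averaging_on_current {g : Type*} [LieRing g]
    [LieAlgebra ℂ g]
    (T : ℕ → (g →ₗ[ℂ] g)) (N : ℕ) (hsupp : ∀ n, N < n → T n = 0)
    (hT1 : ∀ (n m : ℕ) (x y : g),
      ⁅T n x, T m y⁆ =
        ∑ t ∈ range (n + 1), (n.choose t : ℂ) • T (m + t) ⁅T (n - t) x, y⁆)
    (hT2 : ∀ (n m : ℕ) (x y : g),
      T m ⁅T n x, y⁆ =
        ∑ s ∈ range (n + 1), ((-1 : ℂ) ^ s * n.choose s) • ⁅T (n - s) x, T (m + s) y⁆) :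
    ∀ (x y : ℕ →₀ g) (n : ℕ),
      curAveraging T N (curNProd n (curAveraging T N x) y) =
        curNProd n (curAveraging T N x) (curAveraging T N y) := by
  intro x y n
  induction x using Finsupp.induction_linear with
  | zero => simp [curAveraging_zero, curNProd_zero_left]
  | add f f' hf hf' =>
      rw [curAveraging_add, curNProd_add_left, curAveraging_add, hf, hf', curNProd_add_left]
  | single i a =>
      induction y using Finsupp.induction_linear with
      | zero => simp [curAveraging_zero, curNProd_zero_right]
      | add f f' hf hf' =>
          rw [curNProd_add_right, curAveraging_add, hf, hf', curAveraging_add,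
            curNProd_add_right]
      | single j b =>
          rw [lhs_eq, rhs_eq]
          exact (sum_FG hsupp hT1 i j n a b).symm
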